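/- Let G be a non-discrete locally compact group with Haar measure ν, U a symmetric open neighborhood of the identity, and A ⊆ G. If there exists a coset g·Γ(U) of the subgroup Γ(U) = ⋃_{n≥1}Uⁿ such that g·Γ(U) ∩ A ≠ ∅ and g·Γ(U) \ cl(A) ≠ ∅, then ν(cl(A)) < ν(A·U), provided ν(cl(A)) < ∞. -/

import Mathlib

open MeasureTheory Set Pointwise

theorem stmt_5 {G : Type*} [Group G] [TopologicalSpace G] [IsTopologicalGroup G]
    [LocallyCompactSpace G] [MeasurableSpace G] [BorelSpace G]
    (hG : ¬ DiscreteTopology G)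
    (ν : Measure G) [ν.IsHaarMeasure]
    (U : Set G) (hUopen : IsOpen U) (hUone : (1 : G) ∈ U) (hUsymm : U⁻¹ = U)
    (A : Set G)
    (hcoset : ∃ g : G, ((g • ⋃ n : ℕ, U ^ (n + 1)) ∩ A).Nonempty ∧
      ((g • ⋃ n : ℕ, U ^ (n + 1)) \ closure A).Nonempty)
    (hfin : ν (closure A) < ⊤) :
    ν (closure A) < ν (A * U) := by
  obtain ⟨g, ⟨a, haS, haA⟩, ⟨b, hbS, hbA⟩⟩ := hcoset
  -- Step 1: closure A ⊆ A * U
  have hsub : closure A ⊆ A * U := by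
    intro x hx
    rw [mem_closure_iff] at hx
    obtain ⟨y, hyU, hyA⟩ := hx (x • U) (hUopen.smul x) ⟨1, hUone, by simp⟩
    obtain ⟨u, huU, hu⟩ := hyU
    refine ⟨y, hyA, u⁻¹, ?_, by simp [← hu]⟩
    rw [← hUsymm]; exact Set.inv_mem_inv.mpr huU
  -- Step 2: there is a point of A * U outside closure A
  have hT : ((A * U) \ closure A).Nonempty := by
    by_contra hcon
    rw [Set.not_nonempty_iff_eq_empty, Set.diff_eq_empty] at hcon
    -- closure A * {u} ⊆ closure A for u ∈ U
    have key : ∀ x ∈ closure A, ∀ u ∈ U, x * u ∈ closure A := by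
      intro x hx u hu
      have h1 : x * u ∈ closure (A * {u}) := by
        have heq := (Homeomorph.mulRight u).image_closure A
        have hmem : x * u ∈ (Homeomorph.mulRight u) '' closure A := ⟨x, hx, rfl⟩
        rw [heq] at hmem
        have himg : (Homeomorph.mulRight u) '' A = A * {u} := by
          ext z; simp [Set.mem_mul, eq_comm]
        rwa [himg] at hmem
      have h2 : A * {u} ⊆ closure A := by
        rintro z ⟨p, hp, q, hq, hz⟩
        simp only [Set.mem_singleton_iff] at hq
        exact hcon ⟨p, hp, u, hu, by rw [← hz, hq]⟩
      have h3 := closure_mono h2 h1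
      rwa [closure_closure] at h3
    -- induction: a * w ∈ closure A for w ∈ U ^ (n+1)
    have ind : ∀ n : ℕ, ∀ w ∈ U ^ (n + 1), a * w ∈ closure A := by
      intro n
      induction n with
      | zero =>
        intro w hw
        rw [pow_one] at hw
        exact key a (subset_closure haA) w hw
      | succ m ih =>
        intro w hw
        rw [pow_succ] at hw
        obtain ⟨p, hp, q, hq, hpq⟩ := hw
        rw [← hpq, ← mul_assoc]
        exact key _ (ih p hp) q hq
    -- b = a * (a⁻¹ * b), with a⁻¹ * b ∈ ⋃ n, U ^ (n+1)
    obtain ⟨s, hs, hgs⟩ := haS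
    obtain ⟨t, ht, hgt⟩ := hbS
    obtain ⟨_, ⟨m, rfl⟩, hsm⟩ := hs
    obtain ⟨_, ⟨n, rfl⟩, htn⟩ := ht
    have hab : a⁻¹ * b = s⁻¹ * t := by
      simp only [← hgs, ← hgt, smul_eq_mul]; group
    have hsinv : s⁻¹ ∈ U ^ (m + 1) := by
      have : s⁻¹ ∈ (U ^ (m + 1))⁻¹ := Set.inv_mem_inv.mpr hsm
      rwa [← inv_pow, hUsymm] at this
    have hmem : a⁻¹ * b ∈ U ^ (m + 1 + (n + 1)) := by
      rw [hab, pow_add]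
      exact Set.mul_mem_mul hsinv htn
    have : b ∈ closure A := by
      have hb' : b = a * (a⁻¹ * b) := by group
      rw [hb']
      have : m + 1 + (n + 1) = (m + n + 1) + 1 := by ring
      rw [this] at hmem
      exact ind (m + n + 1) _ hmem
    exact hbA this
  -- Step 3: measure argument
  set T := (A * U) \ closure A with hTdef
  have hTopen : IsOpen T := (hUopen.mul_left).sdiff isClosed_closure
  have hTpos : 0 < ν T := hTopen.measure_pos ν hT
  have hdisj : Disjoint (closure A) T := disjoint_sdiff_right
  calc ν (closure A) < ν (closure A) + ν T :=
        ENNReal.lt_add_right hfin.ne hTpos.ne'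
    _ = ν (closure A ∪ T) := (measure_union hdisj hTopen.measurableSet).symm
    _ ≤ ν (A * U) := measure_mono (Set.union_subset hsub Set.diff_subset)
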